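/- Let L/K be a cyclic extension of number fields with group C = Gal(L/K), and let D be the group of fractional ideals of L supported outside a fixed C-stable finite set S of primes of L lying over primes of K. Then the group D^C of C-invariant such ideals is generated by the ideals ∏_{P | p} P = p^{1/e_p(L/K)} for primes p of K outside S, and the index of the extended group of ideals of K in D^C equals ∏_{p ∉ S} e_p(L/K). -/

import Mathlib

set_option linter.unusedSectionVars false
set_option synthInstance.maxHeartbeats 1000000
set_option maxHeartbeats 1000000


open NumberField

section Divisors

variable (K L : Type*) [Field K] [NumberField K] [Field L] [NumberField L] [Algebra K L]

/-- The nonzero prime ideals of the ring of integers of `L`. -/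
abbrev PrimesOf := {P : Ideal (𝓞 L) // P.IsPrime ∧ P ≠ ⊥}

/-- The group of divisors (fractional ideals written additively, i.e. the free abelian group on
the nonzero primes) of `L`. -/
abbrev DivisorGroup := PrimesOf L →₀ ℤ

variable {L}

/-- The subgroup of divisors supported outside the set `S` of primes. -/
noncomputable def divisorsOutside (S : Set (PrimesOf L)) : AddSubgroup (DivisorGroup L) where
  carrier := {d | ∀ P ∈ S, d P = 0}
  zero_mem' := by intro P _; simp
  add_mem' := by intro d e hd he P hP; simp [hd P hP, he P hP]
  neg_mem' := by intro d hd P hP; simp [hd P hP]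

variable (L)

/-- The subgroup of `Gal(L/K)`-invariant (ambiguous) divisors of `L`. -/
noncomputable def invariantDivisors : AddSubgroup (DivisorGroup L) where
  carrier := {d | ∀ (σ : 𝓞 L ≃ₐ[𝓞 K] 𝓞 L) (P Q : PrimesOf L),
    (Q : Ideal (𝓞 L)) = Ideal.comap (σ : 𝓞 L →+* 𝓞 L) (P : Ideal (𝓞 L)) → d Q = d P}
  zero_mem' := by intro σ P Q _; simp
  add_mem' := by intro d e hd he σ P Q h; simp [hd σ P Q h, he σ P Q h]
  neg_mem' := by intro d hd σ P Q h; simp [hd σ P Q h]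

variable {L}

/-- The primes of `K` lying below a set `S` of primes of `L`. -/
def primesBelow (S : Set (PrimesOf L)) : Set (Ideal (𝓞 K)) :=
  {p | ∃ P ∈ S, Ideal.comap (algebraMap (𝓞 K) (𝓞 L)) (P : Ideal (𝓞 L)) = p}

end Divisors

open Ideal
open scoped nonZeroDivisors

section Aux
open scoped Classical
variable (K : Type*) {L : Type*} [Field K] [NumberField K] [Field L] [NumberField L] [Algebra K L]

abbrev pb (P : PrimesOf L) : Ideal (𝓞 K) :=
  Ideal.comap (algebraMap (𝓞 K) (𝓞 L)) (P : Ideal (𝓞 L))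

lemma pb_isPrime (P : PrimesOf L) : (pb K P).IsPrime := P.2.1.comap _

lemma pb_ne_bot (P : PrimesOf L) : pb K P ≠ ⊥ := fun h =>
  P.2.2 (Ideal.eq_bot_of_comap_eq_bot (R := 𝓞 K) h)

lemma pb_comap (σ : 𝓞 L ≃ₐ[𝓞 K] 𝓞 L) (P : Ideal (𝓞 L)) :
    Ideal.comap (algebraMap (𝓞 K) (𝓞 L)) (Ideal.comap (σ : 𝓞 L →+* 𝓞 L) P) =
      Ideal.comap (algebraMap (𝓞 K) (𝓞 L)) P := by
  rw [Ideal.comap_comap]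
  congr 1
  exact σ.toAlgHom.comp_algebraMap


variable (L) in
lemma nonempty_primesOf : Nonempty (PrimesOf L) := by
  obtain ⟨M, hM⟩ := Ideal.exists_maximal (𝓞 L)
  exact ⟨⟨M, hM.isPrime,
    Ring.ne_bot_of_isMaximal_of_not_isField hM (RingOfIntegers.not_isField L)⟩⟩

variable (L) in
open Classical in
noncomputable def Pch (p : Ideal (𝓞 K)) : PrimesOf L :=
  if h : ∃ P : PrimesOf L, pb K P = p then h.choose else (nonempty_primesOf L).some

lemma pb_Pch {p : Ideal (𝓞 K)} (hex : ∃ P : PrimesOf L, pb K P = p) :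
    pb K (Pch K L p) = p := by
  rw [Pch, dif_pos hex]; exact hex.choose_spec

lemma exists_over (p : Ideal (𝓞 K)) (hp : p.IsPrime) (hbot : p ≠ ⊥) :
    ∃ P : PrimesOf L, pb K P = p := by
  obtain ⟨Q, -, hQp, hQc⟩ := Ideal.exists_ideal_over_prime_of_isIntegral
    (R := 𝓞 K) (S := 𝓞 L) p ⊥ (by simp [Ideal.comap_bot_of_injective _
      (FaithfulSMul.algebraMap_injective (𝓞 K) (𝓞 L)), bot_le])
  refine ⟨⟨Q, hQp, fun h => hbot ?_⟩, hQc⟩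
  rw [← hQc, h, Ideal.comap_bot_of_injective _
    (FaithfulSMul.algebraMap_injective (𝓞 K) (𝓞 L))]

lemma map_ne_bot {p : Ideal (𝓞 K)} (hbot : p ≠ ⊥) :
    Ideal.map (algebraMap (𝓞 K) (𝓞 L)) p ≠ ⊥ := by
  rwa [Ne, Ideal.map_eq_bot_iff_of_injective
    (FaithfulSMul.algebraMap_injective (𝓞 K) (𝓞 L))]

lemma ram_ne_zero (P : PrimesOf L) :
    Ideal.ramificationIdx' (pb K P) (P : Ideal (𝓞 L)) ≠ 0 :=
  IsDedekindDomain.ramificationIdx_ne_zero (map_ne_bot K (pb_ne_bot K P)) P.2.1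
    (Ideal.map_le_iff_le_comap.mpr le_rfl)

lemma fiber_finite (p : Ideal (𝓞 K)) (hbot : p ≠ ⊥) :
    {P : PrimesOf L | pb K P = p}.Finite := by
  have hfin := Ideal.finite_factors (show Ideal.map (algebraMap (𝓞 K) (𝓞 L)) p ≠ 0 from
    map_ne_bot K hbot)
  have hsub : {P : PrimesOf L | pb K P = p} ⊆
      (fun P : PrimesOf L =>
        (⟨P.1, P.2.1, P.2.2⟩ : IsDedekindDomain.HeightOneSpectrum (𝓞 L))) ⁻¹'
        {v | v.asIdeal ∣ Ideal.map (algebraMap (𝓞 K) (𝓞 L)) p} := by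
    intro P hP
    simp only [Set.mem_preimage, Set.mem_setOf_eq]
    exact Ideal.dvd_iff_le.mpr (Ideal.map_le_iff_le_comap.mpr (le_of_eq hP.symm))
  refine Set.Finite.subset (hfin.preimage ?_) hsub
  intro P _ Q _ h
  exact Subtype.ext (congrArg IsDedekindDomain.HeightOneSpectrum.asIdeal h)

variable [FiniteDimensional K L]

lemma differentIdeal_ne_bot' : differentIdeal (𝓞 K) (𝓞 L) ≠ ⊥ := by
  intro h
  have hc := coeIdeal_differentIdeal (𝓞 K) K L (𝓞 L)
  rw [h] at hc
  simp only [FractionalIdeal.coeIdeal_bot] at hc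
  exact FractionalIdeal.dual_ne_zero (𝓞 K) K (I := (1 : FractionalIdeal (𝓞 L)⁰ L)) one_ne_zero
    (by rw [← inv_inv (FractionalIdeal.dual (𝓞 K) K 1), ← hc, inv_zero])

lemma ramified_finite :
    {p : Ideal (𝓞 K) | ∃ P : PrimesOf L, pb K P = p ∧
      Ideal.ramificationIdx' p (P : Ideal (𝓞 L)) ≠ 1}.Finite := by
  have hfin := Ideal.finite_factors (show differentIdeal (𝓞 K) (𝓞 L) ≠ 0 from
    differentIdeal_ne_bot' K)
  refine Set.Finite.subset (hfin.image
    (fun v : IsDedekindDomain.HeightOneSpectrum (𝓞 L) =>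
      pb K ⟨v.asIdeal, v.isPrime, v.ne_bot⟩)) ?_
  rintro p ⟨P, rfl, he⟩
  set e := Ideal.ramificationIdx' (pb K P) (P : Ideal (𝓞 L)) with hedef
  have he0 : e ≠ 0 := ram_ne_zero K P
  haveI : (pb K P).IsMaximal := (pb_isPrime K P).isMaximal (pb_ne_bot K P)
  have hdvd : (P : Ideal (𝓞 L)) ^ e ∣ Ideal.map (algebraMap (𝓞 K) (𝓞 L)) (pb K P) :=
    Ideal.dvd_iff_le.mpr Ideal.le_pow_ramificationIdx
  have hdiff : (P : Ideal (𝓞 L)) ^ (e - 1) ∣ differentIdeal (𝓞 K) (𝓞 L) :=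
    pow_sub_one_dvd_differentIdeal (𝓞 K) (P : Ideal (𝓞 L)) e (pb_ne_bot K P) hdvd
  have hPd : (P : Ideal (𝓞 L)) ∣ differentIdeal (𝓞 K) (𝓞 L) :=
    dvd_trans (dvd_pow_self _ (by omega)) hdiff
  exact ⟨⟨P.1, P.2.1, P.2.2⟩, hPd, rfl⟩


variable (L) in
noncomputable def Efun (p : Ideal (𝓞 K)) : ℕ :=
  sSup {n : ℕ | ∃ P : PrimesOf L,
    Ideal.comap (algebraMap (𝓞 K) (𝓞 L)) (P : Ideal (𝓞 L)) = p ∧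
    n = Ideal.ramificationIdx' p (P : Ideal (𝓞 L))}

variable [IsGalois K L]

lemma exists_comap (P Q : PrimesOf L) (h : pb K P = pb K Q) :
    ∃ σ : 𝓞 L ≃ₐ[𝓞 K] 𝓞 L,
      (Q : Ideal (𝓞 L)) = Ideal.comap (σ : 𝓞 L →+* 𝓞 L) (P : Ideal (𝓞 L)) := by
  classical
  by_contra hcon
  push_neg at hcon
  haveI : Fintype (𝓞 L ≃ₐ[𝓞 K] 𝓞 L) :=
    Fintype.ofEquiv _ (galRestrict (𝓞 K) K L (𝓞 L)).toEquiv
  have hmax : ∀ σ : 𝓞 L ≃ₐ[𝓞 K] 𝓞 L,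
      (Ideal.comap (σ : 𝓞 L →+* 𝓞 L) (P : Ideal (𝓞 L))).IsMaximal := fun σ =>
    Ideal.comap_isMaximal_of_surjective _ σ.surjective
      (H := P.2.1.isMaximal P.2.2)
  have hQmax : (Q : Ideal (𝓞 L)).IsMaximal := Q.2.1.isMaximal Q.2.2
  have hiff := Ideal.subset_union_prime (I := (Q : Ideal (𝓞 L)))
    (s := (Finset.univ : Finset (𝓞 L ≃ₐ[𝓞 K] 𝓞 L)))
    (f := fun σ : 𝓞 L ≃ₐ[𝓞 K] 𝓞 L => Ideal.comap (σ : 𝓞 L →+* 𝓞 L) (P : Ideal (𝓞 L)))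
    1 1 (fun σ _ _ _ => (hmax σ).isPrime)
  have hsub : ¬ ((Q : Ideal (𝓞 L)) : Set (𝓞 L)) ⊆
      ⋃ σ ∈ ((Finset.univ : Finset (𝓞 L ≃ₐ[𝓞 K] 𝓞 L)) : Set (𝓞 L ≃ₐ[𝓞 K] 𝓞 L)),
        ((Ideal.comap (σ : 𝓞 L →+* 𝓞 L) (P : Ideal (𝓞 L))) : Set (𝓞 L)) := by
    rw [hiff]
    rintro ⟨σ, -, hle⟩
    exact hcon σ (hQmax.eq_of_le (hmax σ).ne_top hle)
  rw [Set.not_subset] at hsub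
  obtain ⟨x, hxQ, hx⟩ := hsub
  simp only [Finset.coe_univ, Set.mem_iUnion, Set.mem_univ, Set.iUnion_true, not_exists,
    SetLike.mem_coe, Ideal.mem_comap] at hx
  have hprod : (∏ τ : L ≃ₐ[K] L, galRestrict (𝓞 K) K L (𝓞 L) τ x) ∈ (Q : Ideal (𝓞 L)) := by
    obtain ⟨c, hc⟩ := Finset.dvd_prod_of_mem
      (fun τ : L ≃ₐ[K] L => galRestrict (𝓞 K) K L (𝓞 L) τ x) (Finset.mem_univ 1)
    rw [hc]
    have h1 : galRestrict (𝓞 K) K L (𝓞 L) 1 x = x := by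
      rw [map_one]; rfl
    rw [h1]
    exact Ideal.mul_mem_right _ _ hxQ
  rw [prod_galRestrict_eq_norm] at hprod
  have hmem : _ ∈ pb K Q := hprod
  rw [← h] at hmem
  have hPmem : (∏ τ : L ≃ₐ[K] L, galRestrict (𝓞 K) K L (𝓞 L) τ x) ∈ (P : Ideal (𝓞 L)) := by
    rw [prod_galRestrict_eq_norm]; exact hmem
  obtain ⟨τ, -, hτ⟩ := (Ideal.IsPrime.prod_mem_iff (hp := P.2.1)).mp hPmem
  exact hx (galRestrict (𝓞 K) K L (𝓞 L) τ) hτ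



lemma ram_eq (P Q : PrimesOf L) (h : pb K P = pb K Q) :
    Ideal.ramificationIdx' (pb K P) (Q : Ideal (𝓞 L)) =
      Ideal.ramificationIdx' (pb K P) (P : Ideal (𝓞 L)) := by
  obtain ⟨σ, hσ⟩ := exists_comap K P Q h
  rw [hσ]
  exact Ideal.ramificationIdx_comap_eq (pb K P) σ (P : Ideal (𝓞 L))

lemma E_eq {p : Ideal (𝓞 K)} (P : PrimesOf L) (hP : pb K P = p) :
    Efun K L p = Ideal.ramificationIdx' p (P : Ideal (𝓞 L)) := by
  subst hP
  have hset : {n : ℕ | ∃ Q : PrimesOf L,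
      Ideal.comap (algebraMap (𝓞 K) (𝓞 L)) (Q : Ideal (𝓞 L)) = pb K P ∧
      n = Ideal.ramificationIdx' (pb K P) (Q : Ideal (𝓞 L))} =
      {Ideal.ramificationIdx' (pb K P) (P : Ideal (𝓞 L))} := by
    ext n
    constructor
    · rintro ⟨Q, hQ, rfl⟩
      exact ram_eq K P Q hQ.symm
    · rintro rfl
      exact ⟨P, rfl, rfl⟩
  rw [Efun, hset, csSup_singleton]

lemma E_ne_zero {p : Ideal (𝓞 K)} (hp : p.IsPrime) (hbot : p ≠ ⊥) : Efun K L p ≠ 0 := by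
  obtain ⟨P, hP⟩ := exists_over (L := L) K p hp hbot
  rw [E_eq K P hP, ← hP]
  exact ram_ne_zero K P

lemma mem_divisorsOutside {S : Set (PrimesOf L)} {d : DivisorGroup L} :
    d ∈ divisorsOutside S ↔ ∀ P ∈ S, d P = 0 := Iff.rfl

lemma mem_invariantDivisors {d : DivisorGroup L} :
    d ∈ invariantDivisors K L ↔ ∀ (σ : 𝓞 L ≃ₐ[𝓞 K] 𝓞 L) (P Q : PrimesOf L),
      (Q : Ideal (𝓞 L)) = Ideal.comap (σ : 𝓞 L →+* 𝓞 L) (P : Ideal (𝓞 L)) → d Q = d P :=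
  Iff.rfl

variable (L) in
open Classical in
noncomputable def dgen (p : Ideal (𝓞 K)) (c : ℤ) : DivisorGroup L :=
  if h : {P : PrimesOf L | pb K P = p}.Finite then ∑ P ∈ h.toFinset, Finsupp.single P c else 0

lemma dgen_apply {p : Ideal (𝓞 K)} (hbot : p ≠ ⊥) (c : ℤ) (Q : PrimesOf L) :
    dgen K L p c Q = if pb K Q = p then c else 0 := by
  classical
  rw [dgen, dif_pos (fiber_finite K p hbot), Finsupp.finset_sum_apply]
  simp only [Finsupp.single_apply]
  rw [Finset.sum_ite_eq' (fiber_finite K p hbot).toFinset Q (fun _ => c)]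
  simp only [Set.Finite.mem_toFinset, Set.mem_setOf_eq]

lemma dgen_smul {p : Ideal (𝓞 K)} (hbot : p ≠ ⊥) (m c : ℤ) :
    m • dgen K L p c = dgen K L p (m * c) := by
  ext Q
  rw [Finsupp.smul_apply, dgen_apply K hbot, dgen_apply K hbot]
  split_ifs <;> simp

lemma const_on_fibers {d : DivisorGroup L} (hd : d ∈ invariantDivisors K L)
    (P Q : PrimesOf L) (h : pb K P = pb K Q) : d Q = d P := by
  obtain ⟨σ, hσ⟩ := exists_comap K P Q h
  exact hd σ P Q hσ

lemma d_eq_Pch {d : DivisorGroup L} (hd : d ∈ invariantDivisors K L) (Q : PrimesOf L) :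
    d Q = d (Pch K L (pb K Q)) := by
  refine const_on_fibers K hd _ Q ?_
  exact pb_Pch K ⟨Q, rfl⟩

lemma dgen_mem {S : Set (PrimesOf L)} {p : Ideal (𝓞 K)} (hbot : p ≠ ⊥)
    (hS : p ∉ primesBelow K S) (c : ℤ) :
    dgen K L p c ∈ divisorsOutside S ⊓ invariantDivisors K L := by
  rw [AddSubgroup.mem_inf]
  constructor
  · intro P hPS
    rw [dgen_apply K hbot, if_neg]
    intro hPp
    exact hS ⟨P, hPS, hPp⟩
  · intro σ P Q hQ
    rw [dgen_apply K hbot, dgen_apply K hbot]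
    have : pb K Q = pb K P := by
      have h2 := congrArg (Ideal.comap (algebraMap (𝓞 K) (𝓞 L))) hQ
      rw [pb_comap] at h2
      exact h2
    rw [this]

lemma dec {d : DivisorGroup L} (hd : d ∈ invariantDivisors K L) :
    d = ∑ p ∈ d.support.image (pb K), dgen K L p (d (Pch K L p)) := by
  classical
  ext Q
  rw [Finsupp.finset_sum_apply]
  have hterm : ∀ p ∈ d.support.image (pb K),
      dgen K L p (d (Pch K L p)) Q = if pb K Q = p then d (Pch K L p) else 0 := by
    intro p hp
    obtain ⟨P, -, rfl⟩ := Finset.mem_image.mp hp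
    exact dgen_apply K (pb_ne_bot K P) _ Q
  rw [Finset.sum_congr rfl hterm, Finset.sum_ite_eq]
  split_ifs with hmem
  · exact d_eq_Pch K hd Q
  · by_contra hne
    exact hmem (Finset.mem_image_of_mem (pb K) (Finsupp.mem_support_iff.mpr fun h0 => hne (by rw [h0])))

end Aux

section Main
open scoped Classical
variable {K L : Type*} [Field K] [NumberField K] [Field L] [NumberField L]
    [Algebra K L] [FiniteDimensional K L] [IsGalois K L]

theorem part1 (S : Set (PrimesOf L)) :
    divisorsOutside S ⊓ invariantDivisors K L =
      AddSubgroup.closure {d : DivisorGroup L | ∃ p : Ideal (𝓞 K),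
        p.IsPrime ∧ p ≠ ⊥ ∧ p ∉ primesBelow K S ∧ ∀ P : PrimesOf L,
          d P = if Ideal.comap (algebraMap (𝓞 K) (𝓞 L)) (P : Ideal (𝓞 L)) = p then 1 else 0} := by
  apply le_antisymm
  · intro d hd
    have hd1 := (AddSubgroup.mem_inf.mp hd).1
    have hd2 : d ∈ invariantDivisors K L := (AddSubgroup.mem_inf.mp hd).2
    rw [dec K hd2]
    refine AddSubgroup.sum_mem _ ?_
    intro p hp
    obtain ⟨P0, hP0s, hP0p⟩ := Finset.mem_image.mp hp
    have hprime : p.IsPrime := hP0p ▸ pb_isPrime K P0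
    have hne : p ≠ ⊥ := hP0p ▸ pb_ne_bot K P0
    have hnotS : p ∉ primesBelow K S := by
      rintro ⟨P, hPS, hPp⟩
      have h1 : d P = 0 := hd1 P hPS
      have h2 : d P = d P0 := const_on_fibers K hd2 P0 P (by rw [hP0p]; exact hPp.symm)
      exact Finsupp.mem_support_iff.mp hP0s (by rw [← h2, h1])
    have hsm : dgen K L p (d (Pch K L p)) = (d (Pch K L p)) • dgen K L p 1 := by
      rw [dgen_smul K hne, mul_one]
    rw [hsm]
    refine AddSubgroup.zsmul_mem _ (AddSubgroup.subset_closure ?_) _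
    refine ⟨p, hprime, hne, hnotS, fun P => ?_⟩
    rw [dgen_apply K hne]
  · rw [AddSubgroup.closure_le]
    rintro d ⟨p, hp1, hp2, hp3, hval⟩
    rw [SetLike.mem_coe, AddSubgroup.mem_inf]
    constructor
    · intro P hPS
      rw [hval P, if_neg]
      intro h
      exact hp3 ⟨P, hPS, h⟩
    · intro σ P Q hQ
      rw [hval P, hval Q]
      have h2 := congrArg (Ideal.comap (algebraMap (𝓞 K) (𝓞 L))) hQ
      rw [pb_comap] at h2
      rw [h2]

theorem part2 (S : Set (PrimesOf L)) :
    (AddSubgroup.closure {d : DivisorGroup L | ∃ p : Ideal (𝓞 K),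
        p.IsPrime ∧ p ≠ ⊥ ∧ p ∉ primesBelow K S ∧ ∀ P : PrimesOf L,
          d P = if Ideal.comap (algebraMap (𝓞 K) (𝓞 L)) (P : Ideal (𝓞 L)) = p then
            (Ideal.ramificationIdx' p (P : Ideal (𝓞 L)) : ℤ)
          else 0}).relIndex (divisorsOutside S ⊓ invariantDivisors K L) =
      ∏ᶠ (p : Ideal (𝓞 K)) (_ : p.IsPrime ∧ p ≠ ⊥ ∧ p ∉ primesBelow K S),
        sSup {n : ℕ | ∃ P : PrimesOf L,
          Ideal.comap (algebraMap (𝓞 K) (𝓞 L)) (P : Ideal (𝓞 L)) = p ∧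
          n = Ideal.ramificationIdx' p (P : Ideal (𝓞 L))} := by
  have hE : ∀ p : Ideal (𝓞 K), sSup {n : ℕ | ∃ P : PrimesOf L,
      Ideal.comap (algebraMap (𝓞 K) (𝓞 L)) (P : Ideal (𝓞 L)) = p ∧
      n = Ideal.ramificationIdx' p (P : Ideal (𝓞 L))} =
      Efun K L p := fun p => rfl
  simp only [hE]
  set cond : Ideal (𝓞 K) → Prop := fun p => p.IsPrime ∧ p ≠ ⊥ ∧ p ∉ primesBelow K S with hcond
  have hT2 : {p : Ideal (𝓞 K) | cond p ∧ Efun K L p ≠ 1}.Finite := by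
    refine Set.Finite.subset (ramified_finite K (L := L)) ?_
    rintro p ⟨hc, hE1⟩
    obtain ⟨P, hP⟩ := exists_over (L := L) K p hc.1 hc.2.1
    exact ⟨P, hP, by rw [← E_eq K P hP]; exact hE1⟩
  set R : Finset (Ideal (𝓞 K)) := hT2.toFinset with hR
  have hmemR : ∀ {p : Ideal (𝓞 K)}, p ∈ R ↔ cond p ∧ Efun K L p ≠ 1 := fun {p} =>
    hT2.mem_toFinset
  have hEne : ∀ {p : Ideal (𝓞 K)}, cond p → Efun K L p ≠ 0 := fun {p} hc =>
    E_ne_zero K hc.1 hc.2.1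
  have hpbPch : ∀ {p : Ideal (𝓞 K)}, cond p → pb K (Pch K L p) = p := fun {p} hc =>
    pb_Pch K (exists_over (L := L) K p hc.1 hc.2.1)
  -- the evaluation homomorphism
  set ψ : DivisorGroup L →+ ∀ p : R, ZMod (Efun K L p.1) :=
    { toFun := fun d p => ((d (Pch K L p.1) : ℤ) : ZMod (Efun K L p.1))
      map_zero' := by funext p; simp
      map_add' := by
        intro x y
        funext p
        simp [Finsupp.add_apply] } with hψ
  set G := divisorsOutside S ⊓ invariantDivisors K L with hG
  set φ : G →+ ∀ p : R, ZMod (Efun K L p.1) := ψ.comp G.subtype with hφ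
  set Gen2 : Set (DivisorGroup L) := {d : DivisorGroup L | ∃ p : Ideal (𝓞 K),
      p.IsPrime ∧ p ≠ ⊥ ∧ p ∉ primesBelow K S ∧ ∀ P : PrimesOf L,
        d P = if Ideal.comap (algebraMap (𝓞 K) (𝓞 L)) (P : Ideal (𝓞 L)) = p then
          (Ideal.ramificationIdx' p (P : Ideal (𝓞 L)) : ℤ)
        else 0} with hGen2
  -- the kernel of ψ contains the closure of Gen2
  have hHle : AddSubgroup.closure Gen2 ≤ ψ.ker := by
    rw [AddSubgroup.closure_le]
    rintro x ⟨q, hq1, hq2, hq3, hval⟩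
    rw [SetLike.mem_coe, AddMonoidHom.mem_ker]
    funext p
    have hcondp : cond p.1 := (hmemR.mp p.2).1
    have hpb : pb K (Pch K L p.1) = p.1 := hpbPch hcondp
    show ((x (Pch K L p.1) : ℤ) : ZMod (Efun K L p.1)) = 0
    rw [hval (Pch K L p.1)]
    by_cases hqq : (p.1 : Ideal (𝓞 K)) = q
    · subst hqq
      rw [if_pos hpb, ← E_eq K (Pch K L p.1) hpb]
      simp
    · have hpb' : Ideal.comap (algebraMap (𝓞 K) (𝓞 L)) ((Pch K L p.1 : PrimesOf L) : Ideal (𝓞 L))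
          = p.1 := hpb
      rw [if_neg (fun h => hqq (hpb'.symm.trans h))]
      simp
  -- kernel of φ equals the closure viewed in G
  have hker : φ.ker = (AddSubgroup.closure Gen2).addSubgroupOf G := by
    ext d
    rw [AddMonoidHom.mem_ker, AddSubgroup.mem_addSubgroupOf]
    constructor
    · intro h0
      -- decompose
      have hdG : (d : DivisorGroup L) ∈ G := d.2
      have hd1 := (AddSubgroup.mem_inf.mp hdG).1
      have hd2 := (AddSubgroup.mem_inf.mp hdG).2
      rw [dec K hd2]
      refine AddSubgroup.sum_mem _ ?_
      intro p hp
      obtain ⟨P0, hP0s, hP0p⟩ := Finset.mem_image.mp hp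
      have hprime : p.IsPrime := hP0p ▸ pb_isPrime K P0
      have hne : p ≠ ⊥ := hP0p ▸ pb_ne_bot K P0
      have hnotS : p ∉ primesBelow K S := by
        rintro ⟨P, hPS, hPp⟩
        have h1 : (d : DivisorGroup L) P = 0 := hd1 P hPS
        have h2 : (d : DivisorGroup L) P = (d : DivisorGroup L) P0 :=
          const_on_fibers K hd2 P0 P (by rw [hP0p]; exact hPp.symm)
        exact Finsupp.mem_support_iff.mp hP0s (by rw [← h2, h1])
      have hcondp : cond p := ⟨hprime, hne, hnotS⟩
      have hdvd : (Efun K L p : ℤ) ∣ (d : DivisorGroup L) (Pch K L p) := by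
        by_cases hE1 : Efun K L p = 1
        · rw [hE1]; exact one_dvd _
        · have hpR : p ∈ R := hmemR.mpr ⟨hcondp, hE1⟩
          have := congrFun h0 ⟨p, hpR⟩
          exact (ZMod.intCast_zmod_eq_zero_iff_dvd _ _).mp this
      obtain ⟨m, hm⟩ := hdvd
      rw [hm, mul_comm, ← dgen_smul K hne]
      refine AddSubgroup.zsmul_mem _ (AddSubgroup.subset_closure ?_) _
      refine ⟨p, hprime, hne, hnotS, fun P => ?_⟩
      rw [dgen_apply K hne]
      split_ifs with h
      · rw [E_eq K P h]
      · rfl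
    · intro hH
      exact hHle hH
  -- surjectivity
  have hsurj : Function.Surjective φ := by
    intro a
    have hmem : (∑ p ∈ R.attach, ((a p).val : ℤ) • dgen K L p.1 1) ∈ G := by
      refine AddSubgroup.sum_mem _ (fun p _ => AddSubgroup.zsmul_mem _ ?_ _)
      have hcondp : cond p.1 := (hmemR.mp p.2).1
      exact dgen_mem K hcondp.2.1 hcondp.2.2 1
    refine ⟨⟨_, hmem⟩, ?_⟩
    funext q
    have hcondq : cond q.1 := (hmemR.mp q.2).1
    haveI : NeZero (Efun K L q.1) := ⟨hEne hcondq⟩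
    show ((((∑ p ∈ R.attach, ((a p).val : ℤ) • dgen K L p.1 1)) (Pch K L q.1) : ℤ) :
      ZMod (Efun K L q.1)) = a q
    rw [Finsupp.finset_sum_apply]
    have hterm : ∀ p ∈ R.attach,
        (((a p).val : ℤ) • dgen K L p.1 1) (Pch K L q.1) =
          if q = p then ((a p).val : ℤ) else 0 := by
      intro p _
      have hcondp : cond p.1 := (hmemR.mp p.2).1
      rw [Finsupp.smul_apply, dgen_apply K hcondp.2.1, hpbPch hcondq]
      by_cases h : q = p
      · rw [if_pos (by rw [h]), if_pos h]; simp
      · rw [if_neg (fun hh => h (Subtype.ext hh)), if_neg h]; simp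
    rw [Finset.sum_congr rfl hterm, Finset.sum_ite_eq R.attach q (fun p => ((a p).val : ℤ)),
      if_pos (R.mem_attach q)]
    rw [Int.cast_natCast]
    exact ZMod.natCast_rightInverse (a q)
  -- compute the index
  rw [AddSubgroup.relIndex, ← hker, AddSubgroup.index_ker]
  have hrange : φ.range = ⊤ := AddMonoidHom.range_eq_top_of_surjective φ hsurj
  rw [hrange]
  rw [show Nat.card (⊤ : AddSubgroup (∀ p : R, ZMod (Efun K L p.1))) =
    Nat.card (∀ p : R, ZMod (Efun K L p.1)) from Nat.card_congr AddSubgroup.topEquiv.toEquiv]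
  rw [Nat.card_pi]
  simp only [Nat.card_zmod]
  rw [Finset.prod_coe_sort R (fun p => Efun K L p)]
  -- identify with the finprod
  refine (finprod_cond_eq_prod_of_cond_iff (Efun K L) ?_).symm
  intro p hp
  rw [hmemR]
  exact ⟨fun h => ⟨h, hp⟩, fun h => h.1⟩

end Main

open scoped Classical in
/-- Let `L/K` be a finite Galois extension of number fields with group `C`, and let `D` be the
group of fractional ideals (divisors) of `L` supported outside a fixed `C`-stable finite set `S`
of primes of `L`. Then the group `D^C` of `C`-invariant such divisors is generated by the
divisors `∏_{P∣p} P = p^{1/e_p(L/K)}` for the primes `p` of `K` outside `S`, and the index in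
`D^C` of the group of divisors extended from `K` equals `∏_{p ∉ S} e_p(L/K)`. -/
theorem stmt_11 (K L : Type*) [Field K] [NumberField K] [Field L] [NumberField L]
    [Algebra K L] [FiniteDimensional K L] [IsGalois K L]
    (S : Set (PrimesOf L)) (hSfin : S.Finite)
    (hSstable : ∀ (σ : 𝓞 L ≃ₐ[𝓞 K] 𝓞 L), ∀ P ∈ S, ∀ Q : PrimesOf L,
      (Q : Ideal (𝓞 L)) = Ideal.comap (σ : 𝓞 L →+* 𝓞 L) (P : Ideal (𝓞 L)) → Q ∈ S) :
    (divisorsOutside S ⊓ invariantDivisors K L =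
      AddSubgroup.closure {d : DivisorGroup L | ∃ p : Ideal (𝓞 K),
        p.IsPrime ∧ p ≠ ⊥ ∧ p ∉ primesBelow K S ∧ ∀ P : PrimesOf L,
          d P = if Ideal.comap (algebraMap (𝓞 K) (𝓞 L)) (P : Ideal (𝓞 L)) = p then 1 else 0}) ∧
    ((AddSubgroup.closure {d : DivisorGroup L | ∃ p : Ideal (𝓞 K),
        p.IsPrime ∧ p ≠ ⊥ ∧ p ∉ primesBelow K S ∧ ∀ P : PrimesOf L,
          d P = if Ideal.comap (algebraMap (𝓞 K) (𝓞 L)) (P : Ideal (𝓞 L)) = p then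
            (Ideal.ramificationIdx' p (P : Ideal (𝓞 L)) : ℤ)
          else 0}).relIndex (divisorsOutside S ⊓ invariantDivisors K L) =
      ∏ᶠ (p : Ideal (𝓞 K)) (_ : p.IsPrime ∧ p ≠ ⊥ ∧ p ∉ primesBelow K S),
        sSup {n : ℕ | ∃ P : PrimesOf L,
          Ideal.comap (algebraMap (𝓞 K) (𝓞 L)) (P : Ideal (𝓞 L)) = p ∧
          n = Ideal.ramificationIdx' p (P : Ideal (𝓞 L))}) := by
  exact ⟨part1 S, part2 S⟩
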